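/- Let R be a linear operator on R^p with ‖Rz‖ ≤ ‖z‖ and ‖(R − I)z‖² ≥ r‖z‖² for all z, for some r > 0, and let P be a linear map with operator norm at most 1. Then for every α ∈ (0,1) and every z̃ ∈ R^p, m̃ ∈ R^q, it holds that ‖(1−α)z̃ + αRz̃ + αPm̃‖² − ‖z̃‖² ≤ −α(1−α)r‖z̃‖² + 2α‖z̃‖‖m̃‖ + α²‖m̃‖². -/

import Mathlib

/-- Boundary-layer increment bound (eq. `increment_pz`): if `R` is nonexpansive with
`‖(R−I)z‖² ≥ r‖z‖²` and `‖P‖ ≤ 1`, then for `α ∈ (0,1)`,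
`‖(1−α)z̃ + αRz̃ + αPm̃‖² − ‖z̃‖² ≤ −α(1−α)r‖z̃‖² + 2α‖z̃‖‖m̃‖ + α²‖m̃‖²`. -/
theorem stmt_5 {p q : ℕ}
    (R : EuclideanSpace ℝ (Fin p) →ₗ[ℝ] EuclideanSpace ℝ (Fin p))
    (P : EuclideanSpace ℝ (Fin q) →ₗ[ℝ] EuclideanSpace ℝ (Fin p))
    (r : ℝ) (hr : 0 < r)
    (hRnonexp : ∀ z, ‖R z‖ ≤ ‖z‖)
    (hRres : ∀ z, r * ‖z‖ ^ 2 ≤ ‖R z - z‖ ^ 2)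
    (hP : ∀ m, ‖P m‖ ≤ ‖m‖) :
    ∀ (α : ℝ), α ∈ Set.Ioo (0 : ℝ) 1 →
      ∀ (z : EuclideanSpace ℝ (Fin p)) (m : EuclideanSpace ℝ (Fin q)),
        ‖(1 - α) • z + α • R z + α • P m‖ ^ 2 - ‖z‖ ^ 2
          ≤ -(α * (1 - α) * r * ‖z‖ ^ 2) + 2 * α * ‖z‖ * ‖m‖ + α ^ 2 * ‖m‖ ^ 2 := by
  intro α hα z m
  obtain ⟨hα0, hα1⟩ := hα
  have h1α : (0:ℝ) < 1 - α := by linarith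
  set v := (1 - α) • z + α • R z with hv
  -- expansion of ‖v‖²
  have e1 : ‖v‖ ^ 2 = (1 - α) ^ 2 * ‖z‖ ^ 2
      + 2 * ((1 - α) * α) * (inner ℝ z (R z) : ℝ) + α ^ 2 * ‖R z‖ ^ 2 := by
    rw [hv, norm_add_sq_real, norm_smul, norm_smul,
      real_inner_smul_left, real_inner_smul_right,
      Real.norm_eq_abs, Real.norm_eq_abs, abs_of_pos hα0, abs_of_pos h1α]
    ring
  have e2 : ‖R z - z‖ ^ 2 = ‖R z‖ ^ 2 - 2 * (inner ℝ z (R z) : ℝ) + ‖z‖ ^ 2 := by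
    rw [norm_sub_sq_real, real_inner_comm]
  have hv2 : ‖v‖ ^ 2 ≤ ‖z‖ ^ 2 - α * (1 - α) * r * ‖z‖ ^ 2 := by
    have h1 := hRnonexp z
    have h2 := hRres z
    have h3 : (0:ℝ) ≤ ‖R z‖ := norm_nonneg _
    have h4 : (0:ℝ) ≤ ‖z‖ := norm_nonneg _
    nlinarith [mul_le_mul_of_nonneg_left h2 (le_of_lt (mul_pos hα0 h1α)),
      mul_self_le_mul_self h3 h1, mul_pos hα0 h1α]
  have hvle : ‖v‖ ≤ ‖z‖ := by
    calc ‖v‖ ≤ ‖(1 - α) • z‖ + ‖α • R z‖ := norm_add_le _ _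
      _ = (1 - α) * ‖z‖ + α * ‖R z‖ := by
          rw [norm_smul, norm_smul, Real.norm_eq_abs, Real.norm_eq_abs,
            abs_of_pos hα0, abs_of_pos h1α]
      _ ≤ (1 - α) * ‖z‖ + α * ‖z‖ := by
          have := hRnonexp z; nlinarith
      _ = ‖z‖ := by ring
  have hfull : ‖v + α • P m‖ ≤ ‖v‖ + α * ‖m‖ := by
    calc ‖v + α • P m‖ ≤ ‖v‖ + ‖α • P m‖ := norm_add_le _ _
      _ = ‖v‖ + α * ‖P m‖ := by
          rw [norm_smul, Real.norm_eq_abs, abs_of_pos hα0]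
      _ ≤ ‖v‖ + α * ‖m‖ := by have := hP m; nlinarith
  have hsq : ‖v + α • P m‖ ^ 2 ≤ (‖v‖ + α * ‖m‖) ^ 2 := by
    have h0 : (0:ℝ) ≤ ‖v + α • P m‖ := norm_nonneg _
    nlinarith
  have hvnn : (0:ℝ) ≤ ‖v‖ := norm_nonneg _
  have hmnn : (0:ℝ) ≤ ‖m‖ := norm_nonneg _
  nlinarith [hsq, hv2, mul_le_mul_of_nonneg_right hvle hmnn, hα0.le,
    mul_nonneg hα0.le hmnn]
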